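/- Let ko_* = ℤ[η, y, w]/(2η, ηy, η³, y² − 4w) with |η| = 1, |y| = 4, |w| = 8, and ku_* = ℤ[u] with |u| = 2, viewed as a ko_*-algebra via η ↦ 0, y ↦ 2u², w ↦ u⁴. Then the graded ring ku_* ⊗_{ko_*} ku_* is isomorphic to ku_*[ũ]/(2ũ² − 2u², ũ⁴ − u⁴) with |ũ| = 2. -/

import Mathlib

open Polynomial

noncomputable section

/-- `ko_* = ℤ[η, y, w]/(2η, ηy, η³, y² − 4w)`, with `η = X 0`, `y = X 1`, `w = X 2`
(of degrees 1, 4, 8). -/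
def koRel : Ideal (MvPolynomial (Fin 3) ℤ) :=
  Ideal.span {2 * MvPolynomial.X 0, MvPolynomial.X 0 * MvPolynomial.X 1,
    MvPolynomial.X 0 ^ 3, MvPolynomial.X 1 ^ 2 - 4 * MvPolynomial.X 2}

/-- The coefficient ring `ko_*` of connective real K-theory. -/
def KoStar : Type := MvPolynomial (Fin 3) ℤ ⧸ koRel

instance : CommRing KoStar := inferInstanceAs (CommRing (MvPolynomial (Fin 3) ℤ ⧸ koRel))

/-- The complexification map `ko_* → ku_* = ℤ[u]`: `η ↦ 0`, `y ↦ 2u²`, `w ↦ u⁴`. -/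
def koToKu : KoStar →+* Polynomial ℤ :=
  Ideal.Quotient.lift koRel
    (MvPolynomial.aeval ![0, 2 * (X : Polynomial ℤ) ^ 2, (X : Polynomial ℤ) ^ 4]).toRingHom
    (by
      intro a ha
      refine (Ideal.span_le.mpr ?_ : koRel ≤ RingHom.ker _) ha
      rintro b hb
      simp only [Set.mem_insert_iff, Set.mem_singleton_iff] at hb
      rcases hb with rfl | rfl | rfl | rfl <;>
        simp [RingHom.mem_ker] <;> ring)

/-- The `ko_*`-algebra structure on `ku_*` given by complexification. -/
instance : Algebra KoStar (Polynomial ℤ) := koToKu.toAlgebra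

/-- `ku_* ⊗_{ko_*} ku_*`. -/
def KuKoKu : Type := TensorProduct KoStar (Polynomial ℤ) (Polynomial ℤ)

instance : CommRing KuKoKu :=
  inferInstanceAs (CommRing (TensorProduct KoStar (Polynomial ℤ) (Polynomial ℤ)))

instance : Algebra (Polynomial ℤ) KuKoKu :=
  inferInstanceAs (Algebra (Polynomial ℤ)
    (TensorProduct KoStar (Polynomial ℤ) (Polynomial ℤ)))

/-- `ku_*[ũ]/(2ũ² − 2u², ũ⁴ − u⁴)`, where the outer variable `X` is `ũ` and `C u` is `u`. -/
def KuTilde : Type :=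
  Polynomial (Polynomial ℤ) ⧸
    Ideal.span {2 * (X : Polynomial (Polynomial ℤ)) ^ 2 - 2 * (C (X : Polynomial ℤ)) ^ 2,
      (X : Polynomial (Polynomial ℤ)) ^ 4 - (C (X : Polynomial ℤ)) ^ 4}

instance : CommRing KuTilde :=
  inferInstanceAs (CommRing (Polynomial (Polynomial ℤ) ⧸
    Ideal.span {2 * (X : Polynomial (Polynomial ℤ)) ^ 2 - 2 * (C (X : Polynomial ℤ)) ^ 2,
      (X : Polynomial (Polynomial ℤ)) ^ 4 - (C (X : Polynomial ℤ)) ^ 4}))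

instance : Algebra (Polynomial ℤ) KuTilde :=
  inferInstanceAs (Algebra (Polynomial ℤ) (Polynomial (Polynomial ℤ) ⧸
    Ideal.span {2 * (X : Polynomial (Polynomial ℤ)) ^ 2 - 2 * (C (X : Polynomial ℤ)) ^ 2,
      (X : Polynomial (Polynomial ℤ)) ^ 4 - (C (X : Polynomial ℤ)) ^ 4}))

-- auxiliary development
namespace Stmt5Aux

open scoped TensorProduct

/-- The ideal of relations defining `KuTilde`. -/
def I : Ideal (Polynomial (Polynomial ℤ)) :=
  Ideal.span {2 * (X : Polynomial (Polynomial ℤ)) ^ 2 - 2 * (C (X : Polynomial ℤ)) ^ 2,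
    (X : Polynomial (Polynomial ℤ)) ^ 4 - (C (X : Polynomial ℤ)) ^ 4}

def mkI : Polynomial (Polynomial ℤ) →ₐ[Polynomial ℤ] KuTilde :=
  Ideal.Quotient.mkₐ (Polynomial ℤ) I

lemma algMap_eq (p : Polynomial ℤ) : algebraMap (Polynomial ℤ) KuTilde p = mkI (C p) := rfl

lemma rel1 : (2 : KuTilde) * mkI X ^ 2 = 2 * mkI (C X) ^ 2 := by
  have h : mkI (2 * X ^ 2 - 2 * C X ^ 2) = 0 :=
    Ideal.Quotient.eq_zero_iff_mem.mpr (Ideal.subset_span (Set.mem_insert _ _))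
  rw [map_sub, sub_eq_zero] at h
  rw [map_mul, map_mul, map_pow, map_pow] at h
  exact h

lemma rel2 : mkI X ^ 4 = mkI (C X) ^ 4 := by
  have h : mkI (X ^ 4 - C X ^ 4) = 0 :=
    Ideal.Quotient.eq_zero_iff_mem.mpr (Ideal.subset_span (Set.mem_insert_of_mem _ rfl))
  rw [map_sub, sub_eq_zero] at h
  simpa using h

def koy : KoStar := Ideal.Quotient.mk koRel (MvPolynomial.X 1)
def kow : KoStar := Ideal.Quotient.mk koRel (MvPolynomial.X 2)
def koeta : KoStar := Ideal.Quotient.mk koRel (MvPolynomial.X 0)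

lemma koToKu_eta : koToKu koeta = 0 :=
  (Ideal.Quotient.lift_mk koRel _ _).trans (by simp)
lemma koToKu_y : koToKu koy = 2 * X ^ 2 :=
  (Ideal.Quotient.lift_mk koRel _ _).trans (by simp)
lemma koToKu_w : koToKu kow = X ^ 4 :=
  (Ideal.Quotient.lift_mk koRel _ _).trans (by simp)

/-- Pure tensors in `KuKoKu`. -/
def tt (p q : Polynomial ℤ) : KuKoKu := p ⊗ₜ[KoStar] q

lemma tt_mul (p q p' q' : Polynomial ℤ) : tt p q * tt p' q' = tt (p * p') (q * q') := by
  show (p ⊗ₜ[KoStar] q) * (p' ⊗ₜ[KoStar] q') = (p * p') ⊗ₜ[KoStar] (q * q')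
  exact Algebra.TensorProduct.tmul_mul_tmul _ _ _ _

lemma tt_add_right (p q q' : Polynomial ℤ) : tt p q + tt p q' = tt p (q + q') :=
  (TensorProduct.tmul_add p q q').symm

lemma tt_add_left (p p' q : Polynomial ℤ) : tt p q + tt p' q = tt (p + p') q :=
  (TensorProduct.add_tmul p p' q).symm

lemma algebraMap_KuKoKu (p : Polynomial ℤ) : algebraMap (Polynomial ℤ) KuKoKu p = tt p 1 := rfl

/-- Moving a scalar across the tensor. -/
lemma tmul_swap (r : KoStar) : tt (koToKu r) 1 = tt 1 (koToKu r) := by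
  have h : koToKu r = r • (1 : Polynomial ℤ) :=
    ((Algebra.smul_def r (1 : Polynomial ℤ)).trans (mul_one _)).symm
  show (koToKu r) ⊗ₜ[KoStar] (1 : Polynomial ℤ) = (1 : Polynomial ℤ) ⊗ₜ[KoStar] (koToKu r)
  rw [h, TensorProduct.smul_tmul]

lemma hy : tt (2 * X ^ 2) 1 = tt 1 (2 * X ^ 2) := by
  rw [← koToKu_y]; exact tmul_swap koy

lemma hw : tt (X ^ 4) 1 = tt 1 (X ^ 4) := by
  rw [← koToKu_w]; exact tmul_swap kow

instance : Algebra KoStar KuTilde :=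
  ((algebraMap (Polynomial ℤ) KuTilde).comp koToKu).toAlgebra

instance : IsScalarTower KoStar (Polynomial ℤ) KuTilde :=
  IsScalarTower.of_algebraMap_eq fun _ => rfl

/-- The right inclusion `ku_* → KuTilde`, `u ↦ ũ`, as a `KoStar`-algebra hom. -/
def g2 : Polynomial ℤ →ₐ[KoStar] KuTilde where
  toRingHom := eval₂RingHom (Int.castRingHom KuTilde) (mkI X)
  commutes' := by
    intro r
    show eval₂ (Int.castRingHom KuTilde) (mkI X) (koToKu r) =
      ((algebraMap (Polynomial ℤ) KuTilde).comp koToKu) r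
    induction r using Quotient.inductionOn' with
    | h p =>
      show ((eval₂RingHom (Int.castRingHom KuTilde) (mkI X)).comp
          (koToKu.comp (Ideal.Quotient.mk koRel))) p =
        (((algebraMap (Polynomial ℤ) KuTilde).comp koToKu).comp (Ideal.Quotient.mk koRel)) p
      refine RingHom.congr_fun (MvPolynomial.ringHom_ext (fun n => by
        simp [RingHom.comp_apply]) (fun i => ?_)) p
      fin_cases i
      · show (eval₂RingHom _ _) (koToKu koeta) = (algebraMap (Polynomial ℤ) KuTilde) (koToKu koeta)
        rw [koToKu_eta]; simp
      · show (eval₂RingHom _ _) (koToKu koy) = (algebraMap (Polynomial ℤ) KuTilde) (koToKu koy)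
        rw [koToKu_y, algMap_eq, coe_eval₂RingHom]
        simp only [map_mul, map_pow, map_ofNat]
        simpa using rel1
      · show (eval₂RingHom _ _) (koToKu kow) = (algebraMap (Polynomial ℤ) KuTilde) (koToKu kow)
        rw [koToKu_w, algMap_eq, coe_eval₂RingHom]
        simp only [map_pow]
        simpa using rel2

lemma g2_X : g2 X = mkI X := by
  show eval₂ (Int.castRingHom KuTilde) (mkI X) X = mkI X
  simp

lemma g2_C (n : ℤ) : g2 (C n) = (n : KuTilde) := by
  show eval₂ (Int.castRingHom KuTilde) (mkI X) (C n) = (n : KuTilde)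
  rw [eval₂_C]
  rfl

def g1 : Polynomial ℤ →ₐ[Polynomial ℤ] KuTilde := Algebra.ofId _ _

def ψ : KuKoKu →ₐ[Polynomial ℤ] KuTilde :=
  Algebra.TensorProduct.lift g1 g2 (fun _ _ => Commute.all _ _)

lemma ψ_tmul (p q : Polynomial ℤ) : ψ (tt p q) = mkI (C p) * g2 q := rfl

def u1 : KuKoKu := tt 1 X

lemma u1_pow (n : ℕ) : u1 ^ n = tt 1 (X ^ n) := by
  show ((1 : Polynomial ℤ) ⊗ₜ[KoStar] (X : Polynomial ℤ)) ^ n = _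
  rw [Algebra.TensorProduct.tmul_pow, one_pow]
  rfl

lemma two_smul_tt (p q : Polynomial ℤ) : (2 : KuKoKu) * tt p q = tt p (2 * q) := by
  rw [two_mul, tt_add_right, ← two_mul]

def φ : KuTilde →ₐ[Polynomial ℤ] KuKoKu :=
  Ideal.Quotient.liftₐ I (aeval u1)
    (by
      intro a ha
      refine (Ideal.span_le.mpr ?_ : I ≤ RingHom.ker (aeval u1).toRingHom) ha
      rintro b hb
      simp only [Set.mem_insert_iff, Set.mem_singleton_iff] at hb
      rcases hb with rfl | rfl
      · show (aeval u1) (2 * X ^ 2 - 2 * C X ^ 2) = 0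
        rw [map_sub, map_mul, map_mul, map_pow, map_pow, aeval_X, aeval_C, map_ofNat,
          sub_eq_zero, u1_pow]
        rw [algebraMap_KuKoKu, show tt X 1 ^ 2 = tt (X ^ 2) 1 from by
          rw [show tt X 1 ^ 2 = tt X 1 * tt X 1 from sq _, tt_mul, mul_one, ← sq]]
        rw [two_smul_tt, two_smul_tt]
        rw [show tt (X ^ 2) (2 * 1) = tt (2 * X ^ 2) 1 from by
          rw [mul_one]
          rw [show tt (X ^ 2) (2:Polynomial ℤ) = tt (X^2) 1 * tt 1 2 from by
            rw [tt_mul, mul_one, one_mul]]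
          rw [show tt (2 * X ^ 2) (1:Polynomial ℤ) = tt 2 1 * tt (X^2) 1 from by
            rw [tt_mul, one_mul]]
          rw [show tt (1:Polynomial ℤ) (2:Polynomial ℤ) = tt 2 1 from by
            have h2 := tmul_swap (2 : KoStar)
            rw [show koToKu (2 : KoStar) = (2 : Polynomial ℤ) from map_ofNat _ 2] at h2
            exact h2.symm]
          ring]
        rw [hy]
      · show (aeval u1) (X ^ 4 - C X ^ 4) = 0
        rw [map_sub, map_pow, map_pow, aeval_X, aeval_C, sub_eq_zero, u1_pow,
          algebraMap_KuKoKu]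
        rw [show tt X 1 ^ 4 = tt (X ^ 4) 1 from by
          rw [show tt X 1 ^ 4 = tt X 1 * tt X 1 * tt X 1 * tt X 1 from by ring]
          rw [tt_mul, tt_mul, tt_mul, mul_one, mul_one, mul_one,
            show (X*X*X*X : Polynomial ℤ) = X^4 from by ring]]
        exact hw.symm)

lemma φ_mkI (p : Polynomial (Polynomial ℤ)) : φ (mkI p) = aeval u1 p :=
  Ideal.Quotient.liftₐ_apply _ _ _ _

lemma φ_comp_g2 (q : Polynomial ℤ) : φ (g2 q) = tt 1 q := by
  have h : φ.toRingHom.comp (g2.toRingHom) =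
      (Algebra.TensorProduct.includeRight (R := KoStar)
        (A := Polynomial ℤ) (B := Polynomial ℤ)).toRingHom := by
    refine ringHom_ext (fun n => ?_) ?_
    · show φ (g2 (C n)) = _
      rw [g2_C]
      simp
      exact (map_intCast _ n).symm
    · show φ (g2 X) = _
      rw [g2_X, φ_mkI, aeval_X]
      rfl
  exact RingHom.congr_fun h q

lemma ψ_φ : ∀ x : KuTilde, ψ (φ x) = x := by
  intro x
  obtain ⟨p, rfl⟩ := Ideal.Quotient.mk_surjective (I := I) x
  show ψ (φ (mkI p)) = mkI p
  rw [φ_mkI]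
  have h : (ψ.toRingHom.comp (aeval u1).toRingHom) = mkI.toRingHom := by
    refine ringHom_ext' ?_ ?_
    · refine ringHom_ext (fun n => ?_) ?_
      · show ψ (aeval u1 (C (C n))) = mkI (C (C n))
        rw [aeval_C, algebraMap_KuKoKu, ψ_tmul, map_one, mul_one]
      · show ψ (aeval u1 (C X)) = mkI (C X)
        rw [aeval_C, algebraMap_KuKoKu, ψ_tmul]
        show mkI (C X) * g2 1 = mkI (C X)
        rw [map_one, mul_one]
    · show ψ (aeval u1 X) = mkI X
      rw [aeval_X, u1, ψ_tmul, g2_X,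
        show (C 1 : Polynomial (Polynomial ℤ)) = 1 from map_one C, map_one, one_mul]
  exact RingHom.congr_fun h p

lemma φ_ψ : ∀ x : KuKoKu, φ (ψ x) = x := by
  intro x
  induction x using TensorProduct.induction_on with
  | zero => show φ (ψ (0 : KuKoKu)) = (0 : KuKoKu); rw [map_zero, map_zero]
  | tmul p q =>
    show φ (ψ (tt p q)) = tt p q
    rw [ψ_tmul, map_mul, φ_comp_g2]
    have h : φ (mkI (C p)) = tt p 1 := by
      rw [φ_mkI, aeval_C]; rfl
    rw [h, tt_mul, mul_one, one_mul]
  | add a b ha hb => exact (congrArg φ (map_add ψ a b)).trans ((map_add φ (ψ a) (ψ b)).trans (by rw [ha, hb]; rfl))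

end Stmt5Aux

/-- As a (graded) commutative augmented `ku_*`-algebra,
`ku_* ⊗_{ko_*} ku_* ≅ ku_*[ũ]/(2ũ² − 2u², ũ⁴ − u⁴)` with `|ũ| = 2`. -/
theorem stmt_5 : Nonempty (KuKoKu ≃ₐ[Polynomial ℤ] KuTilde) :=
  ⟨AlgEquiv.ofAlgHom Stmt5Aux.ψ Stmt5Aux.φ
    (AlgHom.ext Stmt5Aux.ψ_φ) (AlgHom.ext Stmt5Aux.φ_ψ)⟩

end
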